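/- Under the reset property M_{ij}(t) = β_{ij}(t) π_j(t) (with π_j(t)1 = 1), the defective density row vector α(s_n) = π_1(0) ∏_{ℓ=0}^{n-1} P̄_{y_ℓ}(t_ℓ, t_{ℓ+1}) M_{y_ℓ y_{ℓ+1}}(t_{ℓ+1}) factorizes as α(s_n) = [∏_{ℓ=0}^{n-1} π_{y_ℓ}(t_ℓ) P̄_{y_ℓ}(t_ℓ, t_{ℓ+1}) β_{y_ℓ y_{ℓ+1}}(t_{ℓ+1})] · π_{y_n}(t_n); in particular the total mass α(s_n) 1_{d_{y_n}} equals the product over ℓ of the scalars π_{y_ℓ}(t_ℓ) P̄_{y_ℓ}(t_ℓ, t_{ℓ+1}) β_{y_ℓ y_{ℓ+1}}(t_{ℓ+1}), so that the sojourn times are conditionally independent across sojourns given the macro states and jump times. -/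
import Mathlib


open Matrix

/-- The defective density row vector `α(s_n)` of the macro jump data. -/
noncomputable def alphaVec (J : ℕ) (d : Fin J → ℕ) (y : ℕ → Fin J) (t : ℕ → ℝ)
    (Pbar : ∀ i : Fin J, ℝ → ℝ → Matrix (Fin (d i)) (Fin (d i)) ℝ)
    (M : ∀ i j : Fin J, ℝ → Matrix (Fin (d i)) (Fin (d j)) ℝ)
    (π1 : Fin (d (y 0)) → ℝ) : (n : ℕ) → Fin (d (y n)) → ℝ
  | 0 => π1
  | n + 1 =>
      (alphaVec J d y t Pbar M π1 n) ᵥ*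
        (Pbar (y n) (t n) (t (n + 1)) * M (y n) (y (n + 1)) (t (n + 1)))

/-- Under the reset property `M_{ij}(t) = β_{ij}(t) π_j(t)`, the defective density
factorizes as `α(s_n) = (∏_ℓ π_{y_ℓ}(t_ℓ) P̄_{y_ℓ}(t_ℓ,t_{ℓ+1}) β_{y_ℓ y_{ℓ+1}}(t_{ℓ+1})) · π_{y_n}(t_n)`,
and in particular the total mass `α(s_n)1` is the product of these scalars. -/
theorem alpha_factorizes_reset (J : ℕ) (d : Fin J → ℕ) (y : ℕ → Fin J) (t : ℕ → ℝ)
    (Pbar : ∀ i : Fin J, ℝ → ℝ → Matrix (Fin (d i)) (Fin (d i)) ℝ)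
    (M : ∀ i j : Fin J, ℝ → Matrix (Fin (d i)) (Fin (d j)) ℝ)
    (β : ∀ i j : Fin J, ℝ → Fin (d i) → ℝ)
    (πv : ∀ j : Fin J, ℝ → Fin (d j) → ℝ)
    (hβ : ∀ i j x a, 0 ≤ β i j x a)
    (hπ0 : ∀ j x b, 0 ≤ πv j x b)
    (hπ1 : ∀ j x, ∑ b, πv j x b = 1)
    (hreset : ∀ i j, i ≠ j → ∀ x, M i j x = vecMulVec (β i j x) (πv j x))
    (hjump : ∀ ℓ : ℕ, y ℓ ≠ y (ℓ + 1))
    (π1 : Fin (d (y 0)) → ℝ) (hinit : π1 = πv (y 0) (t 0)) (n : ℕ) :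
    (∀ b, alphaVec J d y t Pbar M π1 n b =
        (∏ ℓ ∈ Finset.range n,
          ((πv (y ℓ) (t ℓ) ᵥ* Pbar (y ℓ) (t ℓ) (t (ℓ + 1))) ⬝ᵥ
            β (y ℓ) (y (ℓ + 1)) (t (ℓ + 1)))) * πv (y n) (t n) b) ∧
      ∑ b, alphaVec J d y t Pbar M π1 n b =
        ∏ ℓ ∈ Finset.range n,
          ((πv (y ℓ) (t ℓ) ᵥ* Pbar (y ℓ) (t ℓ) (t (ℓ + 1))) ⬝ᵥ
            β (y ℓ) (y (ℓ + 1)) (t (ℓ + 1))) := by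
  have key : ∀ m, ∀ b, alphaVec J d y t Pbar M π1 m b =
      (∏ ℓ ∈ Finset.range m,
        ((πv (y ℓ) (t ℓ) ᵥ* Pbar (y ℓ) (t ℓ) (t (ℓ + 1))) ⬝ᵥ
          β (y ℓ) (y (ℓ + 1)) (t (ℓ + 1)))) * πv (y m) (t m) b := by
    intro m
    induction m with
    | zero => intro b; simp [alphaVec, hinit]
    | succ m ih =>
      intro b
      rw [Finset.prod_range_succ]
      simp only [alphaVec, vecMul, dotProduct, mul_apply,
        hreset _ _ (hjump m), vecMulVec_apply, ih]
      simp only [Finset.mul_sum, Finset.sum_mul]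
      rw [Finset.sum_comm]
      apply Finset.sum_congr rfl
      intro k _
      apply Finset.sum_congr rfl
      intro a _
      ring
  refine ⟨key n, ?_⟩
  calc ∑ b, alphaVec J d y t Pbar M π1 n b
      = ∑ b, (∏ ℓ ∈ Finset.range n,
          ((πv (y ℓ) (t ℓ) ᵥ* Pbar (y ℓ) (t ℓ) (t (ℓ + 1))) ⬝ᵥ
            β (y ℓ) (y (ℓ + 1)) (t (ℓ + 1)))) * πv (y n) (t n) b := by
        exact Finset.sum_congr rfl fun b _ => key n b
    _ = _ := by rw [← Finset.mul_sum, hπ1, mul_one]
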